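/- Second-order coefficient in the expansion of the lowest Robin eigenvalue: for all κ, K ∈ ℝ, with ψ₀(τ) = √2·e^{−τ} and ψ₁(τ) = (κ/√2)·τ·e^{−τ}, one has ∫₀^∞ (κ·ψ₁'(τ) + (κ² − 2K)·τ·ψ₀'(τ))·ψ₀(τ) dτ = K − κ²/4. Equivalently, the unique λ₂ ∈ ℝ for which ∫₀^∞ (λ₂·ψ₀(τ) − κ·ψ₁'(τ) − (κ² − 2K)·τ·ψ₀'(τ))·ψ₀(τ) dτ = 0 is λ₂ = K − κ²/4. -/

import Mathlib

open Real MeasureTheory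

open Filter Set

lemma exp2_deriv (τ : ℝ) :
    HasDerivAt (fun τ : ℝ => Real.exp (-(2*τ))) (-2 * Real.exp (-(2*τ))) τ := by
  have h1 : HasDerivAt (fun τ : ℝ => -(2*τ)) (-2) τ := by
    refine ((hasDerivAt_id τ).const_mul 2).neg.congr_deriv ?_
    norm_num
  simpa [mul_comm] using h1.exp

lemma exp2_tendsto : Tendsto (fun x : ℝ => Real.exp (-(2*x))) atTop (nhds 0) := by
  have h2 : Tendsto (fun x : ℝ => -(2 * x)) atTop atBot := by
    have : Tendsto (fun x : ℝ => (2:ℝ) * x) atTop atTop :=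
      Tendsto.const_mul_atTop (by norm_num) tendsto_id
    exact tendsto_neg_atBot_iff.mpr this
  exact Real.tendsto_exp_atBot.comp h2

lemma xexp2_tendsto : Tendsto (fun x : ℝ => x * Real.exp (-(2*x))) atTop (nhds 0) := by
  have h := Real.tendsto_pow_mul_exp_neg_atTop_nhds_zero 1
  have h2 : Tendsto (fun x : ℝ => 2 * x) atTop atTop :=
    Tendsto.const_mul_atTop (by norm_num) tendsto_id
  have h4 : Tendsto (fun x : ℝ => (2*x) * Real.exp (-(2*x))) atTop (nhds 0) := by
    simpa [Function.comp_def] using h.comp h2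
  have := h4.const_mul (1/2 : ℝ)
  simpa [mul_comm, mul_assoc, mul_left_comm] using this

lemma affine_deriv (a b τ : ℝ) :
    HasDerivAt (fun τ : ℝ => -(a/2 + b/4 + b*τ/2) * Real.exp (-(2*τ)))
      ((a + b * τ) * Real.exp (-(2*τ))) τ := by
  have hc : HasDerivAt (fun τ : ℝ => -(a/2 + b/4 + b*τ/2)) (-(b/2)) τ := by
    have : HasDerivAt (fun τ : ℝ => a/2 + b/4 + b*τ/2) (b/2) τ := by
      simpa using (((hasDerivAt_id τ).const_mul b).div_const 2).const_add (a/2 + b/4)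
    exact this.neg
  have := hc.mul (exp2_deriv τ)
  refine this.congr_deriv ?_
  ring

lemma affine_tendsto (a b : ℝ) :
    Tendsto (fun τ : ℝ => -(a/2 + b/4 + b*τ/2) * Real.exp (-(2*τ))) atTop (nhds 0) := by
  have : Tendsto (fun τ : ℝ => -(a/2 + b/4) * Real.exp (-(2*τ))
      + (-(b/2)) * (τ * Real.exp (-(2*τ)))) atTop (nhds 0) := by
    have := (exp2_tendsto.const_mul (-(a/2 + b/4))).add (xexp2_tendsto.const_mul (-(b/2)))
    simpa using this
  refine this.congr (fun τ => ?_)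
  ring

lemma xexp2_integrable : IntegrableOn (fun τ : ℝ => τ * Real.exp (-(2*τ))) (Set.Ioi 0) := by
  have hd : ∀ x ∈ Set.Ici (0:ℝ), HasDerivAt (fun τ : ℝ => -(0/2 + 1/4 + 1*τ/2) * Real.exp (-(2*τ)))
      ((0 + 1 * x) * Real.exp (-(2*x))) x := fun x _ => affine_deriv 0 1 x
  have h := integrableOn_Ioi_deriv_of_nonneg' hd
    (fun x hx => by have : (0:ℝ) < x := hx; nlinarith [Real.exp_pos (-(2*x))]) (affine_tendsto 0 1)
  refine (integrableOn_congr_fun (fun x _ => by ring) measurableSet_Ioi).mpr h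

lemma exp2_integrable : IntegrableOn (fun τ : ℝ => Real.exp (-(2*τ))) (Set.Ioi 0) := by
  simpa [neg_mul] using exp_neg_integrableOn_Ioi 0 (by norm_num : (0:ℝ) < 2)

lemma affine_integrable (a b : ℝ) :
    IntegrableOn (fun τ : ℝ => (a + b * τ) * Real.exp (-(2*τ))) (Set.Ioi 0) := by
  have h := (exp2_integrable.const_mul a).add (xexp2_integrable.const_mul b)
  refine (integrableOn_congr_fun (fun x _ => by simp only [Pi.add_apply]; ring) measurableSet_Ioi).mpr h

lemma aux_integral (a b : ℝ) :
    ∫ τ in Set.Ioi (0:ℝ), (a + b * τ) * Real.exp (-(2*τ)) = a/2 + b/4 := by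
  have key := integral_Ioi_of_hasDerivAt_of_tendsto
    ((affine_deriv a b 0).continuousAt.continuousWithinAt)
    (fun x _ => affine_deriv a b x) (affine_integrable a b) (affine_tendsto a b)
  rw [key]
  norm_num

noncomputable section

/-- `ψ₀(τ) = √2 e^{−τ}`. -/
def ψ₀ : ℝ → ℝ := fun τ => Real.sqrt 2 * Real.exp (-τ)

/-- `ψ₁(τ) = (κ/√2) τ e^{−τ}`. -/
def ψ₁ (κ : ℝ) : ℝ → ℝ := fun τ => (κ / Real.sqrt 2) * τ * Real.exp (-τ)

lemma exp_neg_deriv (τ : ℝ) : HasDerivAt (fun τ : ℝ => Real.exp (-τ)) (-Real.exp (-τ)) τ := by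
  simpa using ((hasDerivAt_id τ).neg.exp)

lemma dψ₀ (τ : ℝ) : deriv ψ₀ τ = -(Real.sqrt 2 * Real.exp (-τ)) := by
  have h : HasDerivAt ψ₀ (-(Real.sqrt 2 * Real.exp (-τ))) τ := by
    unfold ψ₀
    simpa [mul_comm, mul_left_comm] using (exp_neg_deriv τ).const_mul (Real.sqrt 2)
  exact h.deriv

lemma dψ₁ (κ τ : ℝ) : deriv (ψ₁ κ) τ = κ / Real.sqrt 2 * ((1 - τ) * Real.exp (-τ)) := by
  have h1 : HasDerivAt (fun τ : ℝ => κ / Real.sqrt 2 * τ) (κ / Real.sqrt 2) τ := by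
    simpa using (hasDerivAt_id τ).const_mul (κ / Real.sqrt 2)
  have h : HasDerivAt (ψ₁ κ) (κ / Real.sqrt 2 * ((1 - τ) * Real.exp (-τ))) τ := by
    have := h1.mul (exp_neg_deriv τ)
    refine this.congr_deriv ?_
    ring
  exact h.deriv

lemma sqrt2_facts : Real.sqrt 2 * Real.sqrt 2 = 2 ∧ Real.sqrt 2 ≠ 0 :=
  ⟨Real.mul_self_sqrt (by norm_num), by positivity⟩

lemma exp_sq (τ : ℝ) : Real.exp (-τ) * Real.exp (-τ) = Real.exp (-(2*τ)) := by
  rw [← Real.exp_add]; ring_nf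

/-- Second-order coefficient in the expansion of the lowest Robin eigenvalue:
`∫₀^∞ (κψ₁' + (κ² − 2K)τψ₀')ψ₀ dτ = K − κ²/4`, and `λ₂ = K − κ²/4` is the unique
real number such that `∫₀^∞ (λ₂ψ₀ − κψ₁' − (κ² − 2K)τψ₀')ψ₀ dτ = 0`. -/
theorem robin_second_order_coefficient (κ K : ℝ) :
    (∫ τ in Set.Ioi (0 : ℝ),
        (κ * deriv (ψ₁ κ) τ + (κ ^ 2 - 2 * K) * τ * deriv ψ₀ τ) * ψ₀ τ) =
      K - κ ^ 2 / 4 ∧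
    ∀ lam2 : ℝ,
      (∫ τ in Set.Ioi (0 : ℝ),
          (lam2 * ψ₀ τ - κ * deriv (ψ₁ κ) τ - (κ ^ 2 - 2 * K) * τ * deriv ψ₀ τ) * ψ₀ τ) = 0 ↔
        lam2 = K - κ ^ 2 / 4 := by
  obtain ⟨h2, hne⟩ := sqrt2_facts
  have hκ : κ / Real.sqrt 2 * Real.sqrt 2 = κ := div_mul_cancel₀ κ hne
  have key1 : ∀ τ : ℝ,
      (κ * deriv (ψ₁ κ) τ + (κ ^ 2 - 2 * K) * τ * deriv ψ₀ τ) * ψ₀ τ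
        = (κ^2 + (4*K - 3*κ^2) * τ) * Real.exp (-(2*τ)) := by
    intro τ
    rw [dψ₀, dψ₁]
    show (κ * (κ / Real.sqrt 2 * ((1 - τ) * Real.exp (-τ)))
        + (κ ^ 2 - 2 * K) * τ * -(Real.sqrt 2 * Real.exp (-τ))) * (Real.sqrt 2 * Real.exp (-τ))
      = (κ^2 + (4*K - 3*κ^2) * τ) * Real.exp (-(2*τ))
    have expand : (κ * (κ / Real.sqrt 2 * ((1 - τ) * Real.exp (-τ)))
        + (κ ^ 2 - 2 * K) * τ * -(Real.sqrt 2 * Real.exp (-τ))) * (Real.sqrt 2 * Real.exp (-τ))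
      = κ * (κ / Real.sqrt 2 * Real.sqrt 2) * ((1 - τ) * (Real.exp (-τ) * Real.exp (-τ)))
        - (κ ^ 2 - 2 * K) * τ * (Real.sqrt 2 * Real.sqrt 2) * (Real.exp (-τ) * Real.exp (-τ)) := by
      ring
    rw [expand, hκ, h2, exp_sq]
    ring
  have key2 : ∀ lam2 τ : ℝ,
      (lam2 * ψ₀ τ - κ * deriv (ψ₁ κ) τ - (κ ^ 2 - 2 * K) * τ * deriv ψ₀ τ) * ψ₀ τ
        = ((2*lam2 - κ^2) + (3*κ^2 - 4*K) * τ) * Real.exp (-(2*τ)) := by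
    intro lam2 τ
    rw [dψ₀, dψ₁]
    show (lam2 * (Real.sqrt 2 * Real.exp (-τ)) - κ * (κ / Real.sqrt 2 * ((1 - τ) * Real.exp (-τ)))
        - (κ ^ 2 - 2 * K) * τ * -(Real.sqrt 2 * Real.exp (-τ))) * (Real.sqrt 2 * Real.exp (-τ))
      = ((2*lam2 - κ^2) + (3*κ^2 - 4*K) * τ) * Real.exp (-(2*τ))
    have expand : (lam2 * (Real.sqrt 2 * Real.exp (-τ))
        - κ * (κ / Real.sqrt 2 * ((1 - τ) * Real.exp (-τ)))
        - (κ ^ 2 - 2 * K) * τ * -(Real.sqrt 2 * Real.exp (-τ))) * (Real.sqrt 2 * Real.exp (-τ))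
      = lam2 * (Real.sqrt 2 * Real.sqrt 2) * (Real.exp (-τ) * Real.exp (-τ))
        - κ * (κ / Real.sqrt 2 * Real.sqrt 2) * ((1 - τ) * (Real.exp (-τ) * Real.exp (-τ)))
        + (κ ^ 2 - 2 * K) * τ * (Real.sqrt 2 * Real.sqrt 2) * (Real.exp (-τ) * Real.exp (-τ)) := by
      ring
    rw [expand, hκ, h2, exp_sq]
    ring
  constructor
  · simp only [key1]
    rw [aux_integral]
    ring
  · intro lam2
    simp only [key2]
    rw [aux_integral]
    constructor
    · intro h; linarith
    · intro h; rw [h]; ring
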